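/- Let p = (p_i)_{i∈ℕ} be a probability distribution on ℕ, X^n a sample of n i.i.d. observations from p, and p̂ the maximum likelihood estimator. Let δ₁ > 0 and let m be a positive even integer. Then with probability at least 1 − δ₁, sup_{i∈ℕ} |p_i − p̂_i(X^n)| ≤ (m/(2n)) · (1/δ₁)^{1/m} · ( Σ_{i∈ℕ} Σ_{k=1}^{m/2} (n·p_i(1−p_i))^k )^{1/m}. -/

import Mathlib

open MeasureTheory Real Filter

noncomputable def sampleMeasure (p : PMF ℕ) (n : ℕ) : Measure (Fin n → ℕ) :=
  MeasureTheory.Measure.pi fun _ => p.toMeasure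

noncomputable def mle (n : ℕ) (x : Fin n → ℕ) (i : ℕ) : ℝ :=
  ((Finset.univ.filter fun j => x j = i).card : ℝ) / n

open scoped ENNReal

lemma aux_integral_g_pow (p : PMF ℕ) (i : ℕ) (a : ℕ) :
    ∫ y, ((p i).toReal - if y = i then 1 else 0) ^ a ∂p.toMeasure =
      (p i).toReal * ((p i).toReal - 1) ^ a + (1 - (p i).toReal) * (p i).toReal ^ a := by
  set r := (p i).toReal with hr
  have h1 : ∀ y : ℕ, (r - if y = i then 1 else 0) ^ a
      = r ^ a + Set.indicator {i} (fun _ => (r - 1) ^ a - r ^ a) y := by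
    intro y
    by_cases h : y = i <;> simp [h, Set.indicator]
  have hins : MeasurableSet ({i} : Set ℕ) := measurableSet_singleton i
  simp only [h1]
  rw [integral_add (integrable_const _) ((integrable_const _).indicator hins)]
  rw [integral_const, integral_indicator_const _ hins]
  have hpi : p.toMeasure {i} = p i := p.toMeasure_apply_singleton i hins
  simp [measureReal_def, hpi, hr]
  ring

lemma aux_mombound (r : ℝ) (h0 : 0 ≤ r) (h1 : r ≤ 1) (a : ℕ) (ha : 2 ≤ a) :
    |r * (r - 1) ^ a + (1 - r) * r ^ a| ≤ r * (1 - r) := by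
  have h0' : (0:ℝ) ≤ 1 - r := by linarith
  obtain ⟨b, rfl⟩ : ∃ b, a = b + 1 := ⟨a - 1, by omega⟩
  have key : ∀ x : ℝ, 0 ≤ x → x ≤ 1 → x ^ b ≤ x := by
    intro x hx0 hx1
    calc x ^ b ≤ x ^ 1 := pow_le_pow_of_le_one hx0 hx1 (by omega)
    _ = x := pow_one x
  have e1 : |r * (r - 1) ^ (b+1) + (1 - r) * r ^ (b+1)|
      ≤ r * (1 - r) ^ (b+1) + (1 - r) * r ^ (b+1) := by
    have h3 : |r * (r - 1) ^ (b+1)| = r * (1 - r) ^ (b+1) := by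
      rw [abs_mul, abs_pow, abs_of_nonneg h0, abs_sub_comm, abs_of_nonneg h0']
    calc |r * (r - 1) ^ (b+1) + (1 - r) * r ^ (b+1)|
        ≤ |r * (r - 1) ^ (b+1)| + |(1 - r) * r ^ (b+1)| := abs_add_le _ _
      _ = r * (1 - r) ^ (b+1) + (1 - r) * r ^ (b+1) := by
        rw [h3, abs_mul, abs_of_nonneg h0', abs_pow, abs_of_nonneg h0]
  have e3 : (1 - r) ^ b + r ^ b ≤ 1 := by
    have := key _ h0' (by linarith)
    have := key _ h0 h1
    linarith
  calc |r * (r - 1) ^ (b+1) + (1 - r) * r ^ (b+1)|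
      ≤ r * (1 - r) * ((1 - r) ^ b + r ^ b) := by
        refine e1.trans (le_of_eq ?_); ring
    _ ≤ r * (1 - r) * 1 := mul_le_mul_of_nonneg_left e3 (by positivity)
    _ = r * (1 - r) := mul_one _
lemma count_lemma (n m k : ℕ) :
    (Finset.univ.filter fun f : Fin m → Fin n => (Finset.image f Finset.univ).card = k).card
      ≤ n ^ k * k ^ m := by
  have hsub : (Finset.univ.filter fun f : Fin m → Fin n => (Finset.image f Finset.univ).card = k)
      ⊆ (Finset.powersetCard k (Finset.univ : Finset (Fin n))).biUnion
          (fun s => Fintype.piFinset fun _ : Fin m => s) := by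
    intro f hf
    simp only [Finset.mem_filter, Finset.mem_univ, true_and] at hf
    refine Finset.mem_biUnion.2 ⟨Finset.image f Finset.univ, ?_, ?_⟩
    · exact Finset.mem_powersetCard.2 ⟨Finset.subset_univ _, hf⟩
    · exact Fintype.mem_piFinset.2 fun t => Finset.mem_image_of_mem f (Finset.mem_univ t)
  calc _ ≤ _ := Finset.card_le_card hsub
    _ ≤ ∑ s ∈ Finset.powersetCard k (Finset.univ : Finset (Fin n)),
        (Fintype.piFinset fun _ : Fin m => s).card := Finset.card_biUnion_le
    _ ≤ n ^ k * k ^ m := by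
      have : ∀ s ∈ Finset.powersetCard k (Finset.univ : Finset (Fin n)),
          (Fintype.piFinset fun _ : Fin m => s).card = k ^ m := by
        intro s hs
        rw [Fintype.card_piFinset_const, (Finset.mem_powersetCard.1 hs).2]
      rw [Finset.sum_congr rfl this, Finset.sum_const, Finset.card_powersetCard,
        Finset.card_univ, Fintype.card_fin, smul_eq_mul]
      exact Nat.mul_le_mul_right _ (Nat.choose_le_pow n k)

lemma prod_integral_lemma (p : PMF ℕ) (n m : ℕ) (g : ℕ → ℝ) (f : Fin m → Fin n) :
    ∫ x, ∏ t : Fin m, g (x (f t)) ∂(sampleMeasure p n)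
      = ∏ j : Fin n, ∫ y, g y ^ (Finset.univ.filter fun t => f t = j).card ∂p.toMeasure := by
  letI : MeasureSpace ℕ := ⟨p.toMeasure⟩
  have hvol : sampleMeasure p n = (volume : Measure (Fin n → ℕ)) := rfl
  have hprob : IsProbabilityMeasure (volume : Measure ℕ) := PMF.toMeasure.isProbabilityMeasure p
  have step1 : ∀ x : Fin n → ℕ, ∏ t : Fin m, g (x (f t))
      = ∏ j : Fin n, g (x j) ^ (Finset.univ.filter fun t => f t = j).card := by
    intro x
    rw [← Finset.prod_fiberwise_of_maps_to (g := f) (fun t _ => Finset.mem_univ (f t))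
      (fun t => g (x (f t)))]
    refine Finset.prod_congr rfl fun j _ => ?_
    have : ∀ t ∈ Finset.univ.filter fun t => f t = j, g (x (f t)) = g (x j) := by
      intro t ht
      simp only [Finset.mem_filter] at ht
      rw [ht.2]
    rw [Finset.prod_congr rfl this, Finset.prod_const]
  simp only [step1, hvol]
  exact integral_fintype_prod_eq_prod
    (fun j y => g y ^ (Finset.univ.filter fun t => f t = j).card)
lemma integrable_of_bdd {E : Type*} [MeasurableSpace E] (μ : Measure E) [IsFiniteMeasure μ]
    (f : E → ℝ) (C : ℝ) (hf : Measurable f) (h : ∀ x, |f x| ≤ C) : Integrable f μ := by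
  refine Integrable.mono' (integrable_const C) hf.aestronglyMeasurable (ae_of_all _ fun x => ?_)
  simpa [Real.norm_eq_abs] using h x

section
variable (p : PMF ℕ) (n m : ℕ) (i : ℕ)

lemma sum_gpow_integral_le (hn : 0 < n) (hm : 0 < m) (hme : Even m)
    (g : ℕ → ℝ) (hg1 : ∀ y, |g y| ≤ 1)
    (q : ℝ) (hq : 0 ≤ q)
    (hI0 : ∫ y, g y ^ 0 ∂p.toMeasure = 1)
    (hI1 : ∫ y, g y ^ 1 ∂p.toMeasure = 0)
    (hI2 : ∀ a, 2 ≤ a → |∫ y, g y ^ a ∂p.toMeasure| ≤ q)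
    (prod_integral : ∀ f : Fin m → Fin n,
      ∫ x, ∏ t : Fin m, g (x (f t)) ∂(sampleMeasure p n)
        = ∏ j : Fin n, ∫ y, g y ^ (Finset.univ.filter fun t => f t = j).card ∂p.toMeasure)
    (count_lemma : ∀ k, (Finset.univ.filter
        fun f : Fin m → Fin n => (Finset.image f Finset.univ).card = k).card ≤ n ^ k * k ^ m) :
    ∫ x, (∑ j : Fin n, g (x j)) ^ m ∂(sampleMeasure p n)
      ≤ ((m : ℝ) / 2) ^ m * ∑ k ∈ Finset.Icc 1 (m / 2), ((n : ℝ) * q) ^ k := by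
  classical
  set μ := sampleMeasure p n
  set a : (Fin m → Fin n) → Fin n → ℕ :=
    fun f j => (Finset.univ.filter fun t => f t = j).card with ha
  set Ig : ℕ → ℝ := fun c => ∫ y, g y ^ c ∂p.toMeasure with hIg
  -- expansion
  have expand : ∀ x : Fin n → ℕ, (∑ j : Fin n, g (x j)) ^ m
      = ∑ f ∈ Fintype.piFinset (fun _ : Fin m => (Finset.univ : Finset (Fin n))),
          ∏ t : Fin m, g (x (f t)) := by
    intro x
    calc (∑ j : Fin n, g (x j)) ^ m
        = ∏ _t : Fin m, (∑ j ∈ Finset.univ, g (x j)) := by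
          rw [Finset.prod_const, Finset.card_univ, Fintype.card_fin]
      _ = _ := Finset.prod_univ_sum _ _
  have hmeas : ∀ f : Fin m → Fin n, Measurable fun x : Fin n → ℕ => ∏ t : Fin m, g (x (f t)) := by
    intro f
    exact Finset.measurable_prod _ fun t _ =>
      (measurable_from_top.comp (measurable_pi_apply (f t)))
  have hint : ∀ f : Fin m → Fin n, Integrable (fun x : Fin n → ℕ => ∏ t, g (x (f t))) μ := by
    intro f
    haveI : IsProbabilityMeasure μ := by
      show IsProbabilityMeasure (sampleMeasure p n); unfold sampleMeasure; infer_instance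
    refine integrable_of_bdd μ _ 1 (hmeas f) fun x => ?_
    rw [Finset.abs_prod]
    exact Finset.prod_le_one (fun t _ => abs_nonneg _) (fun t _ => hg1 _)
  have step1 : ∫ x, (∑ j : Fin n, g (x j)) ^ m ∂μ
      = ∑ f ∈ Fintype.piFinset (fun _ : Fin m => (Finset.univ : Finset (Fin n))),
          ∏ j : Fin n, Ig (a f j) := by
    simp only [expand]
    rw [integral_finset_sum _ fun f _ => hint f]
    exact Finset.sum_congr rfl fun f _ => prod_integral f
  rw [step1]
  -- the "good" predicate
  set P : (Fin m → Fin n) → Prop := fun f => ∀ j, a f j ≠ 1 with hP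
  have hzero : ∀ f ∈ Fintype.piFinset (fun _ : Fin m => (Finset.univ : Finset (Fin n))),
      ¬ P f → ∏ j : Fin n, Ig (a f j) = 0 := by
    intro f _ hf
    simp only [hP, not_forall, ne_eq, not_not] at hf
    obtain ⟨j, hj⟩ := hf
    refine Finset.prod_eq_zero (Finset.mem_univ j) ?_
    rw [hj]
    exact hI1
  -- fibers and image
  have himage : ∀ f : Fin m → Fin n,
      (Finset.univ.filter fun j => a f j ≠ 0) = Finset.image f Finset.univ := by
    intro f
    ext j
    simp only [Finset.mem_filter, Finset.mem_univ, true_and, Finset.mem_image, ha]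
    constructor
    · intro h
      obtain ⟨t, ht⟩ := Finset.card_pos.1 (Nat.pos_of_ne_zero h)
      exact ⟨t, (Finset.mem_filter.1 ht).2⟩
    · rintro ⟨t, rfl⟩
      have ht : t ∈ Finset.univ.filter fun s => f s = f t := by simp
      have hpos := Finset.card_pos.2 ⟨t, ht⟩
      omega
  have hsum_a : ∀ f : Fin m → Fin n, ∑ j : Fin n, a f j = m := by
    intro f
    rw [ha, ← Finset.card_eq_sum_card_fiberwise (fun t _ => Finset.mem_univ (f t))]
    simp
  have hk_range : ∀ f : Fin m → Fin n, P f → (Finset.image f Finset.univ).card ∈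
      Finset.Icc 1 (m / 2) := by
    intro f hf
    rw [Finset.mem_Icc]
    constructor
    · have : (Finset.image f Finset.univ).Nonempty := by
        haveI : Nonempty (Fin m) := ⟨⟨0, hm⟩⟩
        exact (Finset.univ_nonempty).image f
      exact Finset.Nonempty.card_pos this
    · have h2 : 2 * (Finset.image f Finset.univ).card ≤ ∑ j : Fin n, a f j := by
        rw [← himage f]
        calc 2 * (Finset.univ.filter fun j => a f j ≠ 0).card
            = ∑ _j ∈ (Finset.univ.filter fun j => a f j ≠ 0), 2 := by
              rw [Finset.sum_const, smul_eq_mul, mul_comm]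
          _ ≤ ∑ j ∈ (Finset.univ.filter fun j => a f j ≠ 0), a f j := by
              refine Finset.sum_le_sum fun j hj => ?_
              have h1 := (Finset.mem_filter.1 hj).2
              have h2 := hf j
              omega
          _ ≤ ∑ j : Fin n, a f j :=
              Finset.sum_le_sum_of_subset (Finset.filter_subset _ _)
      rw [hsum_a f] at h2
      omega
  have hbound : ∀ f : Fin m → Fin n, P f →
      ∏ j : Fin n, Ig (a f j) ≤ q ^ (Finset.image f Finset.univ).card := by
    intro f hf
    calc ∏ j : Fin n, Ig (a f j) ≤ |∏ j : Fin n, Ig (a f j)| := le_abs_self _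
      _ = ∏ j : Fin n, |Ig (a f j)| := Finset.abs_prod _ _
      _ ≤ ∏ j : Fin n, (if a f j = 0 then 1 else q) := by
          refine Finset.prod_le_prod (fun j _ => abs_nonneg _) fun j _ => ?_
          by_cases h0 : a f j = 0
          · simp only [h0, if_true]
            have hIg0 : Ig 0 = 1 := hI0
            rw [hIg0]; norm_num
          · simp only [h0, if_false]
            have := hf j
            exact hI2 _ (by omega)
      _ = q ^ (Finset.image f Finset.univ).card := by
          rw [Finset.prod_ite, Finset.prod_const_one, Finset.prod_const, one_mul,
            ← himage f]
  -- main chain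
  calc ∑ f ∈ Fintype.piFinset (fun _ : Fin m => (Finset.univ : Finset (Fin n))),
        ∏ j : Fin n, Ig (a f j)
      = ∑ f ∈ (Fintype.piFinset (fun _ : Fin m => (Finset.univ : Finset (Fin n)))).filter P,
        ∏ j : Fin n, Ig (a f j) := by
        rw [Finset.sum_filter_of_ne]
        intro f hf hne
        by_contra hPf
        exact hne (hzero f hf hPf)
    _ ≤ ∑ f ∈ (Fintype.piFinset (fun _ : Fin m => (Finset.univ : Finset (Fin n)))).filter P,
        q ^ (Finset.image f Finset.univ).card := by
        refine Finset.sum_le_sum fun f hf => hbound f (Finset.mem_filter.1 hf).2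
    _ = ∑ k ∈ Finset.Icc 1 (m / 2),
        ∑ f ∈ ((Fintype.piFinset (fun _ : Fin m => (Finset.univ : Finset (Fin n)))).filter
            P).filter (fun f => (Finset.image f Finset.univ).card = k),
          q ^ (Finset.image f Finset.univ).card := by
        rw [Finset.sum_fiberwise_of_maps_to]
        intro f hf
        exact hk_range f (Finset.mem_filter.1 hf).2
    _ ≤ ∑ k ∈ Finset.Icc 1 (m / 2), ((m : ℝ) / 2) ^ m * ((n : ℝ) * q) ^ k := by
        refine Finset.sum_le_sum fun k hk => ?_
        have hcast : ((m / 2 : ℕ) : ℝ) = (m : ℝ) / 2 := by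
          obtain ⟨c, rfl⟩ := hme
          have h2 : (c + c) / 2 = c := by omega
          rw [h2]; push_cast; ring
        have hkle : (k : ℝ) ≤ (m : ℝ) / 2 := by
          rw [← hcast]
          exact_mod_cast (Finset.mem_Icc.1 hk).2
        have hterm : ∀ f ∈ ((Fintype.piFinset (fun _ : Fin m => (Finset.univ : Finset (Fin n)))).filter
            P).filter (fun f => (Finset.image f Finset.univ).card = k),
            q ^ (Finset.image f Finset.univ).card = q ^ k := by
          intro f hf
          rw [(Finset.mem_filter.1 hf).2]
        rw [Finset.sum_congr rfl hterm, Finset.sum_const, nsmul_eq_mul]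
        have hsub2 : ((Fintype.piFinset (fun _ : Fin m => (Finset.univ : Finset (Fin n)))).filter
            P).filter (fun f => (Finset.image f Finset.univ).card = k)
            ⊆ Finset.univ.filter (fun f : Fin m → Fin n => (Finset.image f Finset.univ).card = k) := by
          intro f hf
          exact Finset.mem_filter.2 ⟨Finset.mem_univ f, (Finset.mem_filter.1 hf).2⟩
        have hcard : (((Fintype.piFinset (fun _ : Fin m => (Finset.univ : Finset (Fin n)))).filter
            P).filter (fun f => (Finset.image f Finset.univ).card = k)).card ≤ n ^ k * k ^ m :=
          le_trans (Finset.card_le_card hsub2) (count_lemma k)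
        calc ((((Fintype.piFinset (fun _ : Fin m => (Finset.univ : Finset (Fin n)))).filter
            P).filter (fun f => (Finset.image f Finset.univ).card = k)).card : ℝ) * q ^ k
            ≤ ((n ^ k * k ^ m : ℕ) : ℝ) * q ^ k := by
              exact mul_le_mul_of_nonneg_right (by exact_mod_cast hcard) (pow_nonneg hq k)
          _ = (n : ℝ) ^ k * (k : ℝ) ^ m * q ^ k := by push_cast; ring
          _ ≤ (n : ℝ) ^ k * ((m : ℝ) / 2) ^ m * q ^ k := by
              refine mul_le_mul_of_nonneg_right ?_ (pow_nonneg hq k)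
              exact mul_le_mul_of_nonneg_left (pow_le_pow_left₀ (by positivity) hkle m)
                (by positivity)
          _ = ((m : ℝ) / 2) ^ m * ((n : ℝ) * q) ^ k := by rw [mul_pow]; ring
    _ = ((m : ℝ) / 2) ^ m * ∑ k ∈ Finset.Icc 1 (m / 2), ((n : ℝ) * q) ^ k := by
        rw [Finset.mul_sum]
end

lemma moment_i (p : PMF ℕ) (n m : ℕ) (hn : 0 < n) (hm : 0 < m) (hme : Even m) (i : ℕ) :
    ∫ x, ((p i).toReal - mle n x i) ^ m ∂(sampleMeasure p n)
      ≤ ((m : ℝ) / (2 * n)) ^ m *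
          ∑ k ∈ Finset.Icc 1 (m / 2), ((n : ℝ) * ((p i).toReal * (1 - (p i).toReal))) ^ k := by
  set r := (p i).toReal with hrdef
  have hr0 : 0 ≤ r := ENNReal.toReal_nonneg
  have hr1 : r ≤ 1 := by
    rw [hrdef, ← ENNReal.toReal_one]
    exact ENNReal.toReal_mono ENNReal.one_ne_top (p.coe_le_one i)
  set g : ℕ → ℝ := fun y => r - if y = i then 1 else 0 with hgdef
  have hg1 : ∀ y, |g y| ≤ 1 := by
    intro y
    rw [hgdef]
    by_cases h : y = i <;> simp [h, abs_le] <;> constructor <;> linarith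
  have hIA : ∀ a : ℕ, ∫ y, g y ^ a ∂p.toMeasure = r * (r - 1) ^ a + (1 - r) * r ^ a :=
    fun a => aux_integral_g_pow p i a
  have hI0 : ∫ y, g y ^ 0 ∂p.toMeasure = 1 := by rw [hIA]; ring
  have hI1 : ∫ y, g y ^ 1 ∂p.toMeasure = 0 := by rw [hIA]; ring
  have hI2 : ∀ a, 2 ≤ a → |∫ y, g y ^ a ∂p.toMeasure| ≤ r * (1 - r) := by
    intro a ha
    rw [hIA]
    exact aux_mombound r hr0 hr1 a ha
  have hq : 0 ≤ r * (1 - r) := mul_nonneg hr0 (by linarith)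
  have key := sum_gpow_integral_le p n m hn hm hme g hg1 (r * (1 - r)) hq hI0 hI1 hI2
    (fun f => prod_integral_lemma p n m g f) (fun k => count_lemma n m k)
  have hn' : (n : ℝ) ≠ 0 := Nat.cast_ne_zero.2 hn.ne'
  have hpt : ∀ x : Fin n → ℕ, (r - mle n x i) ^ m
      = (1 / (n : ℝ)) ^ m * (∑ j : Fin n, g (x j)) ^ m := by
    intro x
    rw [← mul_pow]
    congr 1
    have hsum : ∑ j : Fin n, g (x j)
        = n * r - ((Finset.univ.filter fun j => x j = i).card : ℝ) := by
      rw [hgdef]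
      rw [Finset.sum_sub_distrib, Finset.sum_const, Finset.card_univ, Fintype.card_fin,
        Finset.sum_boole, nsmul_eq_mul]
    rw [hsum, mle]
    field_simp
  simp only [hpt]
  rw [MeasureTheory.integral_const_mul]
  have hfactor : ((m : ℝ) / (2 * n)) ^ m = (1 / (n : ℝ)) ^ m * ((m : ℝ) / 2) ^ m := by
    rw [← mul_pow]
    congr 1
    field_simp
  rw [hfactor, mul_assoc]
  exact mul_le_mul_of_nonneg_left key (by positivity)

lemma mle_nonneg (n : ℕ) (x : Fin n → ℕ) (i : ℕ) : 0 ≤ mle n x i := by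
  unfold mle; positivity

lemma mle_le_one (n : ℕ) (hn : 0 < n) (x : Fin n → ℕ) (i : ℕ) : mle n x i ≤ 1 := by
  unfold mle
  rw [div_le_one (by exact_mod_cast hn)]
  exact_mod_cast (Finset.card_filter_le _ _).trans (by simp)

lemma r_mem (p : PMF ℕ) (i : ℕ) : 0 ≤ (p i).toReal ∧ (p i).toReal ≤ 1 :=
  ⟨ENNReal.toReal_nonneg, by
    rw [← ENNReal.toReal_one]
    exact ENNReal.toReal_mono ENNReal.one_ne_top (p.coe_le_one i)⟩

lemma mle_measurable (n : ℕ) (i : ℕ) : Measurable fun x : Fin n → ℕ => mle n x i := by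
  have h : (fun x : Fin n → ℕ => ((Finset.univ.filter fun j => x j = i).card : ℝ))
      = fun x => ∑ j : Fin n, if x j = i then (1:ℝ) else 0 := by
    ext x
    rw [Finset.sum_boole]
  unfold mle
  apply Measurable.div_const
  rw [h]
  exact Finset.measurable_sum _ fun j _ =>
    (measurable_from_top (f := fun y : ℕ => if y = i then (1:ℝ) else 0)).comp
      (measurable_pi_apply j)

/-- Proposition 2: with probability at least `1 - δ₁`,
`sup_i |p_i - p̂_i| ≤ (m/(2n)) (1/δ₁)^{1/m} (∑_i ∑_{k=1}^{m/2} (n p_i(1-p_i))^k)^{1/m}`. -/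
theorem stmt_6 (p : PMF ℕ) (n : ℕ) (hn : 0 < n) (δ₁ : ℝ) (hδ₁ : 0 < δ₁)
    (m : ℕ) (hm : 0 < m) (hme : Even m) :
    ENNReal.ofReal (1 - δ₁) ≤
      sampleMeasure p n {x |
        (⨆ i : ℕ, |(p i).toReal - mle n x i|) ≤
          ((m : ℝ) / (2 * n)) * (1 / δ₁) ^ ((1 : ℝ) / m) *
            (∑' i : ℕ, ∑ k ∈ Finset.Icc 1 (m / 2),
                ((n : ℝ) * ((p i).toReal * (1 - (p i).toReal))) ^ k) ^ ((1 : ℝ) / m)} := by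
  classical
  set μ := sampleMeasure p n with hμ
  haveI : IsProbabilityMeasure μ := by
    rw [hμ]; unfold sampleMeasure; infer_instance
  have hm2 : 2 ≤ m := by
    obtain ⟨c, hc⟩ := hme; omega
  have hm2' : 1 ≤ m / 2 := by omega
  set Sf : ℕ → ℝ := fun i => ∑ k ∈ Finset.Icc 1 (m / 2),
      ((n : ℝ) * ((p i).toReal * (1 - (p i).toReal))) ^ k with hSf
  set S : ℝ := ∑' i, Sf i with hS
  set t : ℝ := ((m : ℝ) / (2 * n)) * (1 / δ₁) ^ ((1 : ℝ) / m) * S ^ ((1 : ℝ) / m) with ht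
  have hq0 : ∀ i, 0 ≤ (p i).toReal * (1 - (p i).toReal) := fun i =>
    mul_nonneg (r_mem p i).1 (by linarith [(r_mem p i).2])
  have hq1 : ∀ i, (p i).toReal * (1 - (p i).toReal) ≤ (p i).toReal := fun i => by
    nlinarith [(r_mem p i).1, (r_mem p i).2]
  have hSf0 : ∀ i, 0 ≤ Sf i := fun i =>
    Finset.sum_nonneg fun k _ => pow_nonneg (mul_nonneg (Nat.cast_nonneg n) (hq0 i)) k
  have hS0 : 0 ≤ S := tsum_nonneg hSf0
  have ht0 : 0 ≤ t := by
    refine mul_nonneg (mul_nonneg (by positivity) ?_) ?_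
    · exact Real.rpow_nonneg (by positivity) _
    · exact Real.rpow_nonneg hS0 _
  have hsum_r : Summable fun i => (p i).toReal := by
    apply ENNReal.summable_toReal
    rw [p.tsum_coe]; exact ENNReal.one_ne_top
  have hSummable : Summable Sf := by
    refine Summable.of_nonneg_of_le hSf0 (f := fun i =>
      ((m / 2 : ℕ) : ℝ) * ((n : ℝ) ^ (m / 2) * (p i).toReal)) (fun i => ?_)
      ((hsum_r.mul_left _).mul_left _)
    rw [hSf]
    calc ∑ k ∈ Finset.Icc 1 (m / 2), ((n : ℝ) * ((p i).toReal * (1 - (p i).toReal))) ^ k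
        ≤ ∑ _k ∈ Finset.Icc 1 (m / 2), (n : ℝ) ^ (m / 2) * (p i).toReal := by
          refine Finset.sum_le_sum fun k hk => ?_
          obtain ⟨hk1, hk2⟩ := Finset.mem_Icc.1 hk
          rw [mul_pow]
          have h1 : (n : ℝ) ^ k ≤ (n : ℝ) ^ (m / 2) :=
            pow_le_pow_right₀ (by exact_mod_cast hn) hk2
          have h2 : ((p i).toReal * (1 - (p i).toReal)) ^ k ≤ (p i).toReal := by
            calc ((p i).toReal * (1 - (p i).toReal)) ^ k
                ≤ ((p i).toReal * (1 - (p i).toReal)) ^ 1 :=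
                  pow_le_pow_of_le_one (hq0 i)
                    (by nlinarith [(r_mem p i).1, (r_mem p i).2]) hk1
              _ = _ := pow_one _
              _ ≤ (p i).toReal := hq1 i
          exact mul_le_mul h1 h2 (pow_nonneg (hq0 i) k) (by positivity)
      _ = ((m / 2 : ℕ) : ℝ) * ((n : ℝ) ^ (m / 2) * (p i).toReal) := by
          rw [Finset.sum_const, Nat.card_Icc, nsmul_eq_mul]
          norm_num
  by_cases hδlt : 1 ≤ δ₁
  · exact le_trans (le_of_eq (ENNReal.ofReal_eq_zero.2 (by linarith))) zero_le
  push_neg at hδlt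
  by_cases hqall : ∀ i, (p i).toReal * (1 - (p i).toReal) = 0
  · -- degenerate case: some p i0 = 1
    have hex : ∃ i0, p i0 ≠ 0 := by
      by_contra h
      push_neg at h
      have := p.tsum_coe
      simp [h] at this
    obtain ⟨i0, hi0⟩ := hex
    have hne_top : ∀ i, p i ≠ ⊤ := fun i =>
      (lt_of_le_of_lt (p.coe_le_one i) ENNReal.one_lt_top).ne
    have hr_i0 : (p i0).toReal = 1 := by
      rcases mul_eq_zero.1 (hqall i0) with h | h
      · exfalso
        apply hi0
        rcases (ENNReal.toReal_eq_zero_iff _).1 h with h' | h'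
        · exact h'
        · exact absurd h' (hne_top i0)
      · linarith
    have hp_i0 : p i0 = 1 := (ENNReal.toReal_eq_one_iff _).1 hr_i0
    have hp_other : ∀ i, i ≠ i0 → p i = 0 := by
      intro i hi
      have hsum2 : p i0 + p i ≤ ∑' j, p j := by
        have h1 := ENNReal.sum_le_tsum (f := fun j => p j) ({i0, i} : Finset ℕ)
        rwa [Finset.sum_pair (Ne.symm hi)] at h1
      rw [p.tsum_coe, hp_i0] at hsum2
      have : (1 : ℝ≥0∞) + p i ≤ 1 + 0 := by simpa using hsum2
      exact le_antisymm (by exact (ENNReal.add_le_add_iff_left ENNReal.one_ne_top).1 this)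
        zero_le
    have hμA : μ (Set.pi Set.univ (fun _ : Fin n => ({i0} : Set ℕ))) = 1 := by
      rw [hμ]
      unfold sampleMeasure
      rw [MeasureTheory.Measure.pi_pi]
      have : p.toMeasure {i0} = 1 := by
        rw [p.toMeasure_apply_singleton i0 (measurableSet_singleton i0), hp_i0]
      simp [this]
    have hsub : (Set.pi Set.univ (fun _ : Fin n => ({i0} : Set ℕ)))
        ⊆ {x | (⨆ i : ℕ, |(p i).toReal - mle n x i|) ≤ t} := by
      intro x hx
      simp only [Set.mem_pi, Set.mem_univ, Set.mem_singleton_iff, forall_true_left] at hx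
      have hzero : ∀ i, |(p i).toReal - mle n x i| = 0 := by
        intro i
        by_cases h : i = i0
        · subst h
          have : (Finset.univ.filter fun j => x j = i) = Finset.univ := by
            refine Finset.filter_true_of_mem fun j _ => ?_
            rw [hx j]
          rw [mle, this, hr_i0]
          rw [Finset.card_univ, Fintype.card_fin]
          have hn' : (n : ℝ) ≠ 0 := Nat.cast_ne_zero.2 hn.ne'
          rw [div_self hn']
          simp
        · have : (Finset.univ.filter fun j => x j = i) = ∅ := by
            refine Finset.filter_false_of_mem fun j _ => ?_
            rw [hx j]
            exact fun he => h he.symm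
          rw [mle, this, hp_other i h]
          simp
      have : (⨆ i : ℕ, |(p i).toReal - mle n x i|) = 0 := by
        simp only [hzero]
        exact ciSup_const
      rw [Set.mem_setOf_eq, this]
      exact ht0
    calc ENNReal.ofReal (1 - δ₁) ≤ 1 := ENNReal.ofReal_le_one.2 (by linarith)
      _ = μ (Set.pi Set.univ (fun _ : Fin n => ({i0} : Set ℕ))) := hμA.symm
      _ ≤ _ := measure_mono hsub
  · -- main case
    push_neg at hqall
    obtain ⟨i1, hi1⟩ := hqall
    have hq1pos : 0 < (p i1).toReal * (1 - (p i1).toReal) := lt_of_le_of_ne (hq0 i1) (Ne.symm hi1)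
    have hSpos : 0 < S := by
      have h1 : ((n : ℝ) * ((p i1).toReal * (1 - (p i1).toReal))) ^ 1 ≤ Sf i1 := by
        refine Finset.single_le_sum (f := fun k =>
          ((n : ℝ) * ((p i1).toReal * (1 - (p i1).toReal))) ^ k)
          (fun k _ => pow_nonneg (mul_nonneg (Nat.cast_nonneg n) (hq0 i1)) k) ?_
        rw [Finset.mem_Icc]; omega
      have h2 : Sf i1 ≤ S := hSummable.le_tsum i1 fun j _ => hSf0 j
      have h3 : 0 < ((n : ℝ) * ((p i1).toReal * (1 - (p i1).toReal))) ^ 1 := by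
        rw [pow_one]
        exact mul_pos (by exact_mod_cast hn) hq1pos
      linarith
    have htpos : 0 < t := by
      rw [ht]
      have h1 : (0:ℝ) < (m : ℝ) / (2 * n) := by positivity
      have h2 : (0:ℝ) < (1 / δ₁) ^ ((1:ℝ)/m) := Real.rpow_pos_of_pos (by positivity) _
      have h3 : (0:ℝ) < S ^ ((1:ℝ)/m) := Real.rpow_pos_of_pos hSpos _
      positivity
    set c : ℝ := ((m : ℝ) / (2 * n)) ^ m with hc
    have hcpos : 0 < c := by rw [hc]; positivity
    have htm : t ^ m = c * ((1 / δ₁) * S) := by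
      rw [ht, mul_pow, mul_pow, hc]
      have e1 : ((1 / δ₁) ^ ((1:ℝ)/m)) ^ m = 1 / δ₁ := by
        rw [← Real.rpow_natCast ((1 / δ₁) ^ ((1:ℝ)/m)) m, ← Real.rpow_mul (by positivity)]
        rw [one_div (m:ℝ), inv_mul_cancel₀ (by exact_mod_cast hm.ne'), Real.rpow_one]
      have e2 : (S ^ ((1:ℝ)/m)) ^ m = S := by
        rw [← Real.rpow_natCast (S ^ ((1:ℝ)/m)) m, ← Real.rpow_mul hS0]
        rw [one_div (m:ℝ), inv_mul_cancel₀ (by exact_mod_cast hm.ne'), Real.rpow_one]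
      rw [e1, e2]
      ring
    set F : (Fin n → ℕ) → ℝ≥0∞ :=
      fun x => ∑' i, ENNReal.ofReal (((p i).toReal - mle n x i) ^ m) with hF
    have hΔmeas : ∀ i, Measurable fun x : Fin n → ℕ =>
        ENNReal.ofReal (((p i).toReal - mle n x i) ^ m) := fun i =>
      ENNReal.measurable_ofReal.comp ((measurable_const.sub (mle_measurable n i)).pow_const m)
    have hFmeas : Measurable F := by
      rw [hF]
      exact Measurable.ennreal_tsum hΔmeas
    have hΔabs : ∀ i (x : Fin n → ℕ), |(p i).toReal - mle n x i| ≤ 1 := by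
      intro i x
      rw [abs_le]
      have h1 := mle_nonneg n x i
      have h2 := mle_le_one n hn x i
      have h3 := (r_mem p i).1
      have h4 := (r_mem p i).2
      constructor <;> linarith
    have hΔnn : ∀ i (x : Fin n → ℕ), 0 ≤ ((p i).toReal - mle n x i) ^ m :=
      fun i x => hme.pow_nonneg _
    have hInt : ∀ i, Integrable (fun x => ((p i).toReal - mle n x i) ^ m) μ := by
      intro i
      refine integrable_of_bdd μ _ 1 ((measurable_const.sub (mle_measurable n i)).pow_const m)
        fun x => ?_
      rw [abs_pow]
      exact pow_le_one₀ (abs_nonneg _) (hΔabs i x)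
    have hlint : ∫⁻ x, F x ∂μ ≤ ENNReal.ofReal (c * S) := by
      rw [hF]
      rw [lintegral_tsum fun i => (hΔmeas i).aemeasurable]
      calc ∑' i, ∫⁻ x, ENNReal.ofReal (((p i).toReal - mle n x i) ^ m) ∂μ
          = ∑' i, ENNReal.ofReal (∫ x, ((p i).toReal - mle n x i) ^ m ∂μ) := by
            refine tsum_congr fun i => ?_
            exact (ofReal_integral_eq_lintegral_ofReal (hInt i)
              (ae_of_all _ fun x => hΔnn i x)).symm
        _ ≤ ∑' i, ENNReal.ofReal (c * Sf i) := by
            refine ENNReal.tsum_le_tsum fun i => ENNReal.ofReal_le_ofReal ?_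
            rw [hc, hSf]
            exact moment_i p n m hn hm hme i
        _ = ∑' i, ENNReal.ofReal c * ENNReal.ofReal (Sf i) := by
            refine tsum_congr fun i => ENNReal.ofReal_mul hcpos.le
        _ = ENNReal.ofReal c * ∑' i, ENNReal.ofReal (Sf i) := ENNReal.tsum_mul_left
        _ = ENNReal.ofReal c * ENNReal.ofReal S := by
            rw [hS, ENNReal.ofReal_tsum_of_nonneg hSf0 hSummable]
        _ = ENNReal.ofReal (c * S) := (ENNReal.ofReal_mul hcpos.le).symm
    set τ : ℝ≥0∞ := ENNReal.ofReal (t ^ m) with hτ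
    have htmpos : 0 < t ^ m := pow_pos htpos m
    have hτpos : 0 < τ := by rw [hτ]; exact ENNReal.ofReal_pos.2 htmpos
    have hτtop : τ ≠ ⊤ := ENNReal.ofReal_ne_top
    have hMarkov : μ {x | τ ≤ F x} ≤ ENNReal.ofReal δ₁ := by
      calc μ {x | τ ≤ F x} ≤ (∫⁻ x, F x ∂μ) / τ :=
            meas_ge_le_lintegral_div hFmeas.aemeasurable hτpos.ne' hτtop
        _ ≤ ENNReal.ofReal (c * S) / ENNReal.ofReal (t ^ m) := by
            rw [hτ]
            exact ENNReal.div_le_div_right hlint _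
        _ = ENNReal.ofReal (c * S / (t ^ m)) := (ENNReal.ofReal_div_of_pos htmpos).symm
        _ = ENNReal.ofReal δ₁ := by
            congr 1
            rw [htm]
            field_simp
    have hmb : MeasurableSet {x | τ ≤ F x} := measurableSet_le measurable_const hFmeas
    have hcompl : {x | F x < τ} = {x | τ ≤ F x}ᶜ := by
      ext x; simp [not_le]
    have hsub : {x | F x < τ} ⊆
        {x | (⨆ i : ℕ, |(p i).toReal - mle n x i|) ≤ t} := by
      intro x hx
      rw [Set.mem_setOf_eq] at hx ⊢
      refine Real.iSup_le (fun i => ?_) ht0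
      have h1 : ENNReal.ofReal (((p i).toReal - mle n x i) ^ m) ≤ F x := by
        rw [hF]
        exact ENNReal.le_tsum i
      have h2 : ENNReal.ofReal (((p i).toReal - mle n x i) ^ m) < ENNReal.ofReal (t ^ m) := by
        rw [← hτ]
        exact lt_of_le_of_lt h1 hx
      have h3 : ((p i).toReal - mle n x i) ^ m < t ^ m :=
        (ENNReal.ofReal_lt_ofReal_iff htmpos).1 h2
      by_contra hcon
      push_neg at hcon
      have h4 : t ^ m ≤ |(p i).toReal - mle n x i| ^ m :=
        pow_le_pow_left₀ ht0 hcon.le m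
      rw [hme.pow_abs] at h4
      linarith
    calc ENNReal.ofReal (1 - δ₁)
        = 1 - ENNReal.ofReal δ₁ := by
          rw [ENNReal.ofReal_sub 1 hδ₁.le, ENNReal.ofReal_one]
      _ ≤ 1 - μ {x | τ ≤ F x} := tsub_le_tsub_left hMarkov 1
      _ = μ ({x | τ ≤ F x}ᶜ) := (prob_compl_eq_one_sub hmb).symm
      _ = μ {x | F x < τ} := by rw [hcompl]
      _ ≤ _ := measure_mono hsub
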